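/- arXiv:1510.03416 — 4 statements merged into one kernel-verified Lean document; each statement's English description precedes it below -/
import Mathlib

section
/- For ρ > 0 define Ξ_ρ(s) = ∫₀^∞ t^(s/2 - 1) Ψ(t) exp(-ρ·(log t)²) dt where Ψ(t) = ∑_{n≥1} e^{-πn²t}. Then for all complex s, Ξ_ρ(s) - Ξ_ρ(1-s) = (1/2)·√(π/ρ)·( exp((s-1)²/(16ρ)) - exp(s²/(16ρ)) ). -/
open MeasureTheory Real Filter

noncomputable def Psi (t : ℝ) : ℝ := ∑' n : ℕ, Real.exp (-Real.pi * ((n : ℝ) + 1) ^ 2 * t)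

noncomputable def Xi (ρ : ℝ) (s : ℂ) : ℂ :=
  ∫ t in Set.Ioi (0:ℝ), (t : ℂ) ^ (s / 2 - 1) * (Psi t : ℂ) * (Real.exp (-ρ * Real.log t ^ 2) : ℂ)

lemma psi_summable {t : ℝ} (ht : 0 < t) :
    Summable (fun n : ℕ ↦ Real.exp (-Real.pi * ((n : ℝ) + 1) ^ 2 * t)) := by
  refine Summable.of_nonneg_of_le (f := fun n : ℕ ↦ Real.exp (-(Real.pi * t)) ^ n)
    (fun n ↦ (Real.exp_pos _).le) (fun n ↦ ?_)
    (summable_geometric_of_lt_one (Real.exp_pos _).le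
      (Real.exp_lt_one_iff.mpr (neg_lt_zero.mpr (by positivity))))
  show Real.exp (-Real.pi * ((n : ℝ) + 1) ^ 2 * t) ≤ Real.exp (-(Real.pi * t)) ^ n
  rw [← Real.exp_nat_mul]
  apply Real.exp_le_exp.mpr
  have hπ := Real.pi_pos
  have h1 : (n : ℝ) ≤ ((n : ℝ) + 1) ^ 2 := by nlinarith [(n.cast_nonneg : (0:ℝ) ≤ (n:ℝ))]
  nlinarith [mul_le_mul_of_nonneg_left h1 (mul_pos hπ ht).le]

lemma psi_hasSum {t : ℝ} (ht : 0 < t) :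
    HasSum (fun n : ℕ ↦ Real.exp (-Real.pi * ((n : ℝ) + 1) ^ 2 * t)) (Psi t) :=
  (psi_summable ht).hasSum

lemma psi_nonneg (t : ℝ) : 0 ≤ Psi t :=
  tsum_nonneg fun n ↦ (Real.exp_pos _).le

lemma evenKernel_zero_eq {t : ℝ} (ht : 0 < t) :
    HurwitzZeta.evenKernel 0 t = 1 + 2 * Psi t := by
  have h := HurwitzZeta.hasSum_int_evenKernel 0 ht
  rw [show (((0:ℝ)) : UnitAddCircle) = 0 by norm_num] at h
  simp only [add_zero] at h
  have h2 := h.nat_add_neg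
  have h2' : HasSum (fun n : ℕ ↦ 2 * Real.exp (-Real.pi * ((n:ℝ)) ^ 2 * t))
      (HurwitzZeta.evenKernel 0 t + 1) := by
    convert h2 using 2 with n
    · push_cast; ring_nf
    · norm_num
  have h3 : HasSum (fun n : ℕ ↦ 2 * Real.exp (-Real.pi * (((n:ℕ):ℝ) + 1) ^ 2 * t))
      (2 * Psi t) := (psi_hasSum ht).mul_left 2
  have h4 : HasSum (fun n : ℕ ↦ 2 * Real.exp (-Real.pi * ((((n + 1 : ℕ)):ℝ)) ^ 2 * t))
      (2 * Psi t) := by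
    convert h3 using 2 with n
    push_cast; ring_nf
  rw [(hasSum_nat_add_iff (f := fun n : ℕ ↦ 2 * Real.exp (-Real.pi * ((n:ℝ)) ^ 2 * t)) 1)] at h4
  have := h2'.unique h4
  simp only [Finset.range_one, Finset.sum_singleton, Nat.cast_zero] at this
  norm_num at this
  linarith

lemma sqrt_rexp (x : ℝ) : Real.sqrt (Real.exp x) = Real.exp (x / 2) := by
  rw [show Real.exp x = Real.exp (x / 2) ^ 2 by rw [sq, ← Real.exp_add]; ring_nf,
    Real.sqrt_sq (Real.exp_pos _).le]

lemma psi_one_div {t : ℝ} (ht : 0 < t) :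
    Psi (1 / t) = Real.sqrt t * Psi t + (Real.sqrt t - 1) / 2 := by
  have hfe := HurwitzZeta.evenKernel_functional_equation 0 t
  rw [← HurwitzZeta.evenKernel_eq_cosKernel_of_zero] at hfe
  rw [evenKernel_zero_eq ht, evenKernel_zero_eq (by positivity : (0:ℝ) < 1 / t),
    ← Real.sqrt_eq_rpow] at hfe
  have hs : (0:ℝ) < Real.sqrt t := Real.sqrt_pos.mpr ht
  field_simp at hfe
  nlinarith [hfe]

lemma psi_antitone {a b : ℝ} (ha : 0 < a) (hab : a ≤ b) : Psi b ≤ Psi a := by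
  apply Summable.tsum_le_tsum _ (psi_summable (lt_of_lt_of_le ha hab)) (psi_summable ha)
  intro n
  apply Real.exp_le_exp.mpr
  have hπ := Real.pi_pos
  have h1 : (0:ℝ) < ((n : ℝ) + 1) ^ 2 := by positivity
  nlinarith [mul_le_mul_of_nonneg_left hab (mul_pos hπ h1).le]

lemma psi_bound_small {t : ℝ} (ht : 0 < t) (ht1 : t ≤ 1) :
    Psi t ≤ (Psi 1 + 1) / Real.sqrt t := by
  have hu : (1:ℝ) ≤ 1 / t := by rw [le_div_iff₀ ht]; linarith
  have h := psi_one_div (show (0:ℝ) < 1 / t by positivity)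
  rw [one_div_one_div] at h
  have hs : Real.sqrt (1 / t) = 1 / Real.sqrt t := by
    rw [one_div, one_div, Real.sqrt_inv]
  rw [hs] at h
  have h1 : Psi (1 / t) ≤ Psi 1 := psi_antitone one_pos hu
  have h2 : (0:ℝ) < Real.sqrt t := Real.sqrt_pos.mpr ht
  have h3 : Real.sqrt t ≤ 1 := by
    rw [show (1:ℝ) = Real.sqrt 1 by simp]; exact Real.sqrt_le_sqrt ht1
  have hp1 := psi_nonneg (1 / t)
  rw [h]
  have hi : (0:ℝ) < 1 / Real.sqrt t := by positivity
  have A : 1 / Real.sqrt t * Psi (1 / t) ≤ 1 / Real.sqrt t * Psi 1 :=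
    mul_le_mul_of_nonneg_left h1 hi.le
  have B : (1 / Real.sqrt t - 1) / 2 ≤ 1 / Real.sqrt t := by linarith
  have C : (Psi 1 + 1) / Real.sqrt t = 1 / Real.sqrt t * Psi 1 + 1 / Real.sqrt t := by
    field_simp
  linarith

lemma integrable_rexp_quad {ρ : ℝ} (hρ : 0 < ρ) (a : ℝ) :
    Integrable (fun x : ℝ ↦ Real.exp (a * x - ρ * x ^ 2)) := by
  have h := (integrable_cexp_quadratic (b := (ρ:ℂ)) (by simpa using hρ) (a:ℂ) 0).norm
  have he : (fun x : ℝ ↦ ‖Complex.exp (-(ρ:ℂ) * (x:ℂ) ^ 2 + (a:ℂ) * (x:ℂ) + 0)‖)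
      = fun x : ℝ ↦ Real.exp (a * x - ρ * x ^ 2) := by
    funext x
    rw [show -(ρ:ℂ) * (x:ℂ) ^ 2 + (a:ℂ) * (x:ℂ) + 0 = ((a * x - ρ * x ^ 2 : ℝ) : ℂ) by
      push_cast; ring]
    rw [Complex.norm_exp, Complex.ofReal_re]
  rwa [he] at h

lemma integrable_cexp_lin_quad {ρ : ℝ} (hρ : 0 < ρ) (c : ℂ) :
    Integrable (fun x : ℝ ↦ Complex.exp (c * (x:ℂ) - (ρ:ℂ) * (x:ℂ) ^ 2)) := by
  have h := integrable_cexp_quadratic (b := (ρ:ℂ)) (by simpa using hρ) c 0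
  have he : (fun x : ℝ ↦ Complex.exp (-(ρ:ℂ) * (x:ℂ) ^ 2 + c * (x:ℂ) + 0))
      = fun x : ℝ ↦ Complex.exp (c * (x:ℂ) - (ρ:ℂ) * (x:ℂ) ^ 2) := by
    funext x; congr 1; ring
  rwa [he] at h

lemma continuous_psi_exp : Continuous fun x : ℝ ↦ Psi (Real.exp x) := by
  have h : (fun x : ℝ ↦ Psi (Real.exp x))
      = fun x : ℝ ↦ (HurwitzZeta.evenKernel 0 (Real.exp x) - 1) / 2 := by
    funext x
    rw [evenKernel_zero_eq (Real.exp_pos x)]; ring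
  rw [h]
  exact (((HurwitzZeta.continuousOn_evenKernel 0).comp_continuous Real.continuous_exp
    (fun x ↦ Real.exp_pos x)).sub continuous_const).div_const 2

lemma integrable_psi_term {ρ : ℝ} (hρ : 0 < ρ) (c : ℂ) :
    Integrable (fun x : ℝ ↦
      Complex.exp (c * (x:ℂ) - (ρ:ℂ) * (x:ℂ) ^ 2) * (Psi (Real.exp x) : ℂ)) := by
  set C : ℝ := Psi 1 + 1 with hCdef
  have hC0 : 0 ≤ C := by have := psi_nonneg 1; simp [hCdef]; linarith
  apply Integrable.mono'
    (g := fun x : ℝ ↦ C * (Real.exp (c.re * x - ρ * x ^ 2)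
      + Real.exp ((c.re - 1/2) * x - ρ * x ^ 2)))
  · exact ((integrable_rexp_quad hρ c.re).add (integrable_rexp_quad hρ (c.re - 1/2))).const_mul C
  · apply Continuous.aestronglyMeasurable
    apply Continuous.mul
    · exact Complex.continuous_exp.comp (by fun_prop)
    · exact Complex.continuous_ofReal.comp continuous_psi_exp
  · refine Filter.Eventually.of_forall fun x ↦ ?_
    have hre : (c * (x:ℂ) - (ρ:ℂ) * (x:ℂ) ^ 2).re = c.re * x - ρ * x ^ 2 := by
      simp [Complex.sub_re, Complex.mul_re, Complex.ofReal_re, Complex.ofReal_im, sq]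
      try ring
    rw [norm_mul, Complex.norm_exp, hre, Complex.norm_real,
      Real.norm_eq_abs, abs_of_nonneg (psi_nonneg _)]
    have e1 : 0 < Real.exp (c.re * x - ρ * x ^ 2) := Real.exp_pos _
    have e2 : 0 < Real.exp ((c.re - 1/2) * x - ρ * x ^ 2) := Real.exp_pos _
    rcases le_or_gt 0 x with hx | hx
    · have hb : Psi (Real.exp x) ≤ C := by
        have := psi_antitone one_pos (Real.one_le_exp hx)
        simp [hCdef]; linarith
      nlinarith [mul_le_mul_of_nonneg_left hb e1.le]
    · have hb : Psi (Real.exp x) ≤ C / Real.sqrt (Real.exp x) :=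
        psi_bound_small (Real.exp_pos x) (Real.exp_le_one_iff.mpr hx.le)
      rw [sqrt_rexp] at hb
      have hb2 : Psi (Real.exp x) ≤ C * Real.exp (-(x/2)) := by
        rw [Real.exp_neg, ← div_eq_mul_inv]; exact hb
      calc Real.exp (c.re * x - ρ * x ^ 2) * Psi (Real.exp x)
          ≤ Real.exp (c.re * x - ρ * x ^ 2) * (C * Real.exp (-(x/2))) :=
            mul_le_mul_of_nonneg_left hb2 e1.le
        _ = C * (Real.exp (c.re * x - ρ * x ^ 2) * Real.exp (-(x/2))) := by ring
        _ = C * Real.exp ((c.re - 1/2) * x - ρ * x ^ 2) := by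
            rw [← Real.exp_add]
            congr 2
            ring
        _ ≤ C * (Real.exp (c.re * x - ρ * x ^ 2)
              + Real.exp ((c.re - 1/2) * x - ρ * x ^ 2)) := by nlinarith

lemma integral_Ioi_eq_integral_exp (g : ℝ → ℂ) :
    ∫ t in Set.Ioi (0:ℝ), g t = ∫ x : ℝ, Real.exp x • g (Real.exp x) := by
  rw [← Real.range_exp, ← Set.image_univ,
    integral_image_eq_integral_abs_deriv_smul MeasurableSet.univ
      (fun x _ ↦ (Real.hasDerivAt_exp x).hasDerivWithinAt) Real.exp_injective.injOn g]
  simp [abs_of_pos (Real.exp_pos _), Measure.restrict_univ]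

lemma Xi_eq (ρ : ℝ) (s : ℂ) :
    Xi ρ s = ∫ x : ℝ, Complex.exp ((s/2) * (x:ℂ) - (ρ:ℂ) * (x:ℂ) ^ 2) * (Psi (Real.exp x) : ℂ) := by
  rw [Xi, integral_Ioi_eq_integral_exp]
  congr 1
  funext x
  rw [Real.log_exp, Complex.real_smul, Complex.ofReal_exp,
    Complex.cpow_def_of_ne_zero (Complex.exp_ne_zero _),
    Complex.log_exp (by simpa using Real.pi_pos) (by simp [Real.pi_pos.le]),
    Complex.ofReal_exp]
  rw [show Complex.exp (x:ℂ) * (Complex.exp ((x:ℂ) * (s / 2 - 1)) * (Psi (Real.exp x) : ℂ) *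
      Complex.exp ((-ρ * x ^ 2 : ℝ) : ℂ))
      = (Complex.exp (x:ℂ) * Complex.exp ((x:ℂ) * (s / 2 - 1)) *
        Complex.exp ((-ρ * x ^ 2 : ℝ) : ℂ)) * (Psi (Real.exp x) : ℂ) by ring,
    ← Complex.exp_add, ← Complex.exp_add]
  congr 2
  push_cast
  ring

lemma G_val {ρ : ℝ} (hρ : 0 < ρ) (c : ℂ) :
    ∫ x : ℝ, Complex.exp (c * (x:ℂ) - (ρ:ℂ) * (x:ℂ) ^ 2)
      = (Real.sqrt (Real.pi / ρ) : ℂ) * Complex.exp (c ^ 2 / (4 * (ρ:ℂ))) := by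
  have h := integral_cexp_quadratic (b := -(ρ:ℂ)) (by simpa using hρ) c 0
  simp_rw [show ∀ x : ℝ, -(ρ:ℂ) * (x:ℂ) ^ 2 + c * (x:ℂ) + 0
      = c * (x:ℂ) - (ρ:ℂ) * (x:ℂ) ^ 2 from fun x ↦ by ring] at h
  rw [h, neg_neg, zero_sub, mul_neg, div_neg, neg_neg]
  congr 1
  rw [show ((1:ℂ)/2) = ((1/2 : ℝ) : ℂ) by norm_num, ← Complex.ofReal_div,
    ← Complex.ofReal_cpow (by positivity), ← Real.sqrt_eq_rpow]

lemma neg_arg_eq (ρ : ℝ) (s : ℂ) (x : ℝ) :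
    (1 - s) / 2 * ((-x : ℝ) : ℂ) - (ρ:ℂ) * ((-x : ℝ) : ℂ) ^ 2
      = (s - 1) / 2 * (x:ℂ) - (ρ:ℂ) * (x:ℂ) ^ 2 := by
  push_cast; ring

theorem stmt2 (ρ : ℝ) (hρ : 0 < ρ) (s : ℂ) :
    Xi ρ s - Xi ρ (1 - s)
      = (1/2) * (Real.sqrt (Real.pi / ρ) : ℂ) *
        (Complex.exp ((s - 1) ^ 2 / (16 * (ρ : ℂ))) - Complex.exp (s ^ 2 / (16 * (ρ : ℂ)))) := by
  have hpt : ∀ x : ℝ,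
      Complex.exp ((1 - s) / 2 * ((-x : ℝ) : ℂ) - (ρ:ℂ) * ((-x : ℝ) : ℂ) ^ 2)
        * (Psi (Real.exp (-x)) : ℂ)
      = Complex.exp ((s/2) * (x:ℂ) - (ρ:ℂ) * (x:ℂ) ^ 2) * (Psi (Real.exp x) : ℂ)
        + ((1:ℂ)/2) * (Complex.exp ((s/2) * (x:ℂ) - (ρ:ℂ) * (x:ℂ) ^ 2)
          - Complex.exp (((s-1)/2) * (x:ℂ) - (ρ:ℂ) * (x:ℂ) ^ 2)) := by
    intro x
    rw [neg_arg_eq, show Real.exp (-x) = 1 / Real.exp x by rw [Real.exp_neg, one_div],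
      psi_one_div (Real.exp_pos x), sqrt_rexp]
    have h2 : Complex.exp ((s - 1) / 2 * (x:ℂ) - (ρ:ℂ) * (x:ℂ) ^ 2)
        * Complex.exp (((x : ℝ) / 2 : ℝ) : ℂ)
        = Complex.exp ((s/2) * (x:ℂ) - (ρ:ℂ) * (x:ℂ) ^ 2) := by
      rw [← Complex.exp_add]; congr 1; push_cast; ring
    push_cast [Complex.ofReal_exp] at h2 ⊢
    rw [← h2]
    ring
  have hXi1 : Xi ρ (1 - s)
      = (∫ x : ℝ, Complex.exp ((s/2) * (x:ℂ) - (ρ:ℂ) * (x:ℂ) ^ 2) * (Psi (Real.exp x) : ℂ))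
        + ((1:ℂ)/2) * ((∫ x : ℝ, Complex.exp ((s/2) * (x:ℂ) - (ρ:ℂ) * (x:ℂ) ^ 2))
          - ∫ x : ℝ, Complex.exp (((s-1)/2) * (x:ℂ) - (ρ:ℂ) * (x:ℂ) ^ 2)) := by
    have hB : Integrable (fun x : ℝ ↦ ((1:ℂ)/2) *
        (Complex.exp ((s/2) * (x:ℂ) - (ρ:ℂ) * (x:ℂ) ^ 2)
          - Complex.exp (((s-1)/2) * (x:ℂ) - (ρ:ℂ) * (x:ℂ) ^ 2))) := by
      have hs : Integrable (fun x : ℝ ↦ Complex.exp ((s/2) * (x:ℂ) - (ρ:ℂ) * (x:ℂ) ^ 2)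
          - Complex.exp (((s-1)/2) * (x:ℂ) - (ρ:ℂ) * (x:ℂ) ^ 2)) :=
        (integrable_cexp_lin_quad hρ (s/2)).sub (integrable_cexp_lin_quad hρ ((s-1)/2))
      exact hs.const_mul _
    rw [Xi_eq, ← integral_neg_eq_self]
    simp only [hpt]
    rw [integral_add (integrable_psi_term hρ (s/2)) hB, integral_const_mul ((1:ℂ)/2),
      integral_sub (integrable_cexp_lin_quad hρ (s/2)) (integrable_cexp_lin_quad hρ ((s-1)/2))]
  rw [Xi_eq ρ s, hXi1, G_val hρ (s/2), G_val hρ ((s-1)/2)]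
  have hρ' : (ρ:ℂ) ≠ 0 := by exact_mod_cast hρ.ne'
  rw [show (s/2) ^ 2 / (4 * (ρ:ℂ)) = s ^ 2 / (16 * (ρ:ℂ)) by
      rw [div_pow, div_div]; congr 1; ring,
    show ((s-1)/2) ^ 2 / (4 * (ρ:ℂ)) = (s - 1) ^ 2 / (16 * (ρ:ℂ)) by
      rw [div_pow, div_div]; congr 1; ring]
  ring
end

section
/- Let ρ₁₁, ρ₂₂ > 0 with ρ₁₁ρ₂₂ - ρ₁₂² > 0 (ρ real symmetric 2×2 positive definite), and let Ψ be a measurable function on (0,∞) such that all integrals below converge absolutely. Then ∫_{-∞}^∞ M[Ψ·e^{-ρ₂₂ log²(·)}](s₂/2 + 2(ρ₂₂-ρ₁₂)x) · exp(-(ρ₁₁+ρ₂₂-2ρ₁₂)x² + ((s₁-s₂)/2)x) dx = √(π/(ρ₁₁+ρ₂₂-2ρ₁₂)) · exp((s₁-s₂)²/(16(ρ₁₁+ρ₂₂-2ρ₁₂))) · M[Ψ·e^{-D log²(·)}]( (s₁ρ₂₂ + s₂ρ₁₁ - (s₁+s₂)ρ₁₂) / (2(ρ₁₁+ρ₂₂-2ρ₁₂))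 ), where D = (ρ₁₁ρ₂₂-ρ₁₂²)/(ρ₁₁+ρ₂₂-2ρ₁₂). -/
open MeasureTheory Real

/-- Mellin transform of `f · exp(-ρ log²(·))` at `σ`. -/
noncomputable def MellinG (f : ℝ → ℝ) (ρ : ℝ) (σ : ℂ) : ℂ :=
  ∫ t in Set.Ioi (0:ℝ), (t : ℂ) ^ (σ - 1) * (f t : ℂ) * (Real.exp (-ρ * Real.log t ^ 2) : ℂ)

lemma gauss_real (A B C : ℝ) (hA : 0 < A) :
    ∫ x : ℝ, Real.exp (-A * x ^ 2 + B * x + C)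
      = Real.sqrt (π / A) * Real.exp (C + B ^ 2 / (4 * A)) := by
  have h := integral_cexp_quadratic (b := (-A : ℂ)) (by simpa using hA) (B : ℂ) (C : ℂ)
  have h2 : ∀ x : ℝ, Complex.exp ((-A : ℂ) * x ^ 2 + B * x + C)
      = ((Real.exp (-A * x ^ 2 + B * x + C) : ℝ) : ℂ) := by
    intro x; rw [Complex.ofReal_exp]; push_cast; ring_nf
  simp_rw [h2] at h
  rw [show (fun x : ℝ => ((rexp (-A * x ^ 2 + B * x + C) : ℝ) : ℂ)) = (fun x : ℝ => (RCLike.ofReal (K := ℂ) (rexp (-A * x ^ 2 + B * x + C)))) from rfl, integral_ofReal] at h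
  have hπ : (0:ℝ) ≤ π / A := by positivity
  have h3 : ((π : ℂ) / -(-A : ℂ)) ^ (1/2 : ℂ) = ((Real.sqrt (π / A) : ℝ) : ℂ) := by
    rw [Real.sqrt_eq_rpow, Complex.ofReal_cpow hπ]
    push_cast
    ring_nf
  rw [h3] at h
  have h4 : ((C : ℂ) - (B:ℂ) ^ 2 / (4 * (-A : ℂ))) = ((C + B ^ 2 / (4 * A) : ℝ) : ℂ) := by
    have : (A : ℂ) ≠ 0 := by exact_mod_cast hA.ne'
    push_cast
    field_simp
    ring
  rw [h4, ← Complex.ofReal_exp, ← Complex.ofReal_mul] at h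
  exact Complex.ofReal_injective h

/-- complex sqrt conversion -/
lemma cpow_half_sqrt (A : ℝ) (hA : 0 < A) :
    ((π : ℂ) / (A : ℂ)) ^ (1/2 : ℂ) = ((Real.sqrt (π / A) : ℝ) : ℂ) := by
  have hπ : (0:ℝ) ≤ π / A := by positivity
  rw [Real.sqrt_eq_rpow, Complex.ofReal_cpow hπ]
  push_cast
  ring_nf

set_option maxHeartbeats 1000000 in
theorem stmt8 (ρ11 ρ12 ρ22 : ℝ) (h11 : 0 < ρ11) (h22 : 0 < ρ22)
    (hdet : 0 < ρ11 * ρ22 - ρ12 ^ 2) (Ψ : ℝ → ℝ) (hmeas : Measurable Ψ) (s₁ s₂ : ℂ)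
    (hinner : ∀ x : ℝ, IntegrableOn
      (fun t : ℝ => (t : ℂ) ^ ((s₂ / 2 + 2 * ((ρ22 : ℂ) - ρ12) * (x : ℂ)) - 1) * (Ψ t : ℂ) *
        (Real.exp (-ρ22 * Real.log t ^ 2) : ℂ)) (Set.Ioi 0))
    (houter : Integrable (fun x : ℝ =>
      MellinG Ψ ρ22 (s₂ / 2 + 2 * ((ρ22 : ℂ) - ρ12) * (x : ℂ)) *
        Complex.exp (-((ρ11 : ℂ) + ρ22 - 2 * ρ12) * (x : ℂ) ^ 2 + ((s₁ - s₂) / 2) * (x : ℂ))))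
    (hrhs : IntegrableOn
      (fun t : ℝ => (t : ℂ) ^ (((s₁ * ρ22 + s₂ * ρ11 - (s₁ + s₂) * ρ12) /
          (2 * ((ρ11 : ℂ) + ρ22 - 2 * ρ12))) - 1) * (Ψ t : ℂ) *
        (Real.exp (-((ρ11 * ρ22 - ρ12 ^ 2) / (ρ11 + ρ22 - 2 * ρ12)) * Real.log t ^ 2) : ℂ))
      (Set.Ioi 0)) :
    (∫ x : ℝ, MellinG Ψ ρ22 (s₂ / 2 + 2 * ((ρ22 : ℂ) - ρ12) * (x : ℂ)) *
        Complex.exp (-((ρ11 : ℂ) + ρ22 - 2 * ρ12) * (x : ℂ) ^ 2 + ((s₁ - s₂) / 2) * (x : ℂ)))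
      = (Real.sqrt (Real.pi / (ρ11 + ρ22 - 2 * ρ12)) : ℂ) *
        Complex.exp ((s₁ - s₂) ^ 2 / (16 * ((ρ11 : ℂ) + ρ22 - 2 * ρ12))) *
        MellinG Ψ ((ρ11 * ρ22 - ρ12 ^ 2) / (ρ11 + ρ22 - 2 * ρ12))
          ((s₁ * ρ22 + s₂ * ρ11 - (s₁ + s₂) * ρ12) / (2 * ((ρ11 : ℂ) + ρ22 - 2 * ρ12))) := by
  have hA : (0:ℝ) < ρ11 + ρ22 - 2*ρ12 := by nlinarith [sq_nonneg (ρ11 - ρ22)]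
  set A : ℝ := ρ11 + ρ22 - 2*ρ12 with hAdef
  have hAne : (A : ℂ) ≠ 0 := by exact_mod_cast hA.ne'
  set a : ℂ := (s₁ - s₂)/2 with hadef
  set cr : ℝ := 2*(ρ22 - ρ12) with hcrdef
  set D : ℝ := (ρ11*ρ22 - ρ12^2)/A with hDdef
  set σ₀ : ℂ := (s₁*ρ22 + s₂*ρ11 - (s₁+s₂)*ρ12)/(2*((ρ11:ℂ)+ρ22-2*ρ12)) with hs0def
  set G : ℝ × ℝ → ℂ := fun p => (Ψ p.2 : ℂ) *
    Complex.exp ((Real.log p.2 : ℂ) * (s₂/2 - 1 + (cr:ℂ) * p.1)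
      + ((-ρ22 * Real.log p.2 ^ 2 : ℝ) : ℂ) + (-(A:ℂ) * (p.1:ℂ)^2 + a * p.1)) with hGdef
  clear_value A a cr D σ₀ G
  -- step 1 : pointwise identification of the LHS integrand with G
  have key1 : ∀ x : ℝ, ∀ t ∈ Set.Ioi (0:ℝ),
      (t : ℂ) ^ ((s₂ / 2 + 2 * ((ρ22 : ℂ) - ρ12) * (x:ℂ)) - 1) * (Ψ t : ℂ) *
        ((Real.exp (-ρ22 * Real.log t ^ 2) : ℝ) : ℂ) *
        Complex.exp (-((ρ11:ℂ)+ρ22-2*ρ12) * (x:ℂ)^2 + ((s₁-s₂)/2) * (x:ℂ)) = G (x, t) := by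
    intro x t ht
    have ht' : (0:ℝ) < t := ht
    have ht0 : (t:ℂ) ≠ 0 := Complex.ofReal_ne_zero.mpr (ne_of_gt ht')
    rw [hGdef]
    simp only
    rw [Complex.cpow_def_of_ne_zero ht0, ← Complex.ofReal_log (le_of_lt ht'),
      Complex.ofReal_exp (-ρ22 * Real.log t ^ 2)]
    have comb : ∀ (ψ u v w z : ℂ), u + v + w = z →
        Complex.exp u * ψ * Complex.exp v * Complex.exp w = ψ * Complex.exp z := by
      intro ψ u v w z h; rw [← h, Complex.exp_add, Complex.exp_add]; ring
    apply comb
    push_cast [hadef, hcrdef, hAdef]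
    ring
  -- measurability
  have hGm : Measurable G := by
    rw [hGdef]
    apply Measurable.mul
    · exact Complex.measurable_ofReal.comp (hmeas.comp measurable_snd)
    · apply Complex.measurable_exp.comp
      apply Measurable.add
      apply Measurable.add
      · exact ((Complex.measurable_ofReal.comp (Real.measurable_log.comp measurable_snd)).mul
          ((measurable_const.add (measurable_const.mul
            (Complex.measurable_ofReal.comp measurable_fst)))))
      · exact Complex.measurable_ofReal.comp
          ((measurable_const.mul ((Real.measurable_log.comp measurable_snd).pow measurable_const)))
      · exact ((measurable_const.mul ((Complex.measurable_ofReal.comp measurable_fst).pow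
          measurable_const))).add (measurable_const.mul (Complex.measurable_ofReal.comp measurable_fst))
  have hGmeas : AEStronglyMeasurable G ((volume : Measure ℝ).prod (volume.restrict (Set.Ioi 0))) :=
    hGm.aestronglyMeasurable
  have hACne : ((ρ11:ℂ)+ρ22-2*ρ12) ≠ 0 := by
    have h' : ((ρ11:ℂ)+ρ22-2*ρ12) = ((ρ11+ρ22-2*ρ12 : ℝ) : ℂ) := by push_cast; ring
    rw [h', ← hAdef]; exact hAne
  have hint_x : ∀ t : ℝ, Integrable (fun x : ℝ => G (x, t)) := by
    intro t
    have base := (integrable_cexp_quadratic (b := (A:ℂ)) (by simpa using hA)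
      ((cr:ℂ) * (Real.log t : ℂ) + a)
      ((Real.log t : ℂ) * (s₂/2 - 1) + ((-ρ22 * Real.log t ^ 2 : ℝ) : ℂ))).const_mul ((Ψ t : ℂ))
    refine base.congr (Filter.Eventually.of_forall fun x => ?_)
    rw [hGdef]
    simp only
    congr 1
    congr 1
    ring
  have hs0 : σ₀ = s₂/2 + ((cr/(2*A) : ℝ) : ℂ) * a := by
    rw [hs0def, hadef, hcrdef, hAdef]
    push_cast
    rw [eq_comm, div_mul_div_comm, div_add_div _ _ two_ne_zero (mul_ne_zero (mul_ne_zero two_ne_zero hACne) two_ne_zero), div_eq_div_iff (mul_ne_zero two_ne_zero (mul_ne_zero (mul_ne_zero two_ne_zero hACne) two_ne_zero)) (mul_ne_zero two_ne_zero hACne)]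
    ring
  have hs0re : σ₀.re = (s₂/2).re + cr/(2*A) * a.re := by
    rw [hs0, Complex.add_re, Complex.re_ofReal_mul]
  have hkey : ∀ L : ℝ, ((((s₂/2).re - 1) * L - ρ22 * L^2) + (cr*L + a.re)^2/(4*A))
      = a.re^2/(4*A) + (L * (σ₀.re - 1) + (-D * L^2)) := by
    intro L
    have hAne0 : ρ11 + ρ22 - 2*ρ12 ≠ 0 := by rw [← hAdef]; exact hA.ne'
    rw [hs0re, hcrdef, hDdef, hAdef]
    field_simp [hAne0]
    ring
  have hnorm : ∀ t ∈ Set.Ioi (0:ℝ), (∫ x : ℝ, ‖G (x, t)‖)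
      = (Real.sqrt (π/A) * rexp ((a.re)^2/(4*A))) *
        ‖(t : ℂ) ^ (σ₀ - 1) * (Ψ t : ℂ) * ((Real.exp (-D * Real.log t ^ 2) : ℝ) : ℂ)‖ := by
    intro t ht
    have ht' : (0:ℝ) < t := ht
    have h1 : ∀ x : ℝ, ‖G (x, t)‖ = ‖(Ψ t : ℂ)‖ *
        rexp (-A * x^2 + (cr * Real.log t + a.re) * x
          + (((s₂/2).re - 1) * Real.log t - ρ22 * Real.log t^2)) := by
      intro x
      rw [hGdef]
      simp only
      rw [norm_mul, Complex.norm_exp]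
      congr 2
      simp [Complex.add_re, Complex.mul_re, Complex.ofReal_re, Complex.ofReal_im,
        Complex.sub_re, Complex.one_re, Complex.neg_re, Complex.mul_im, ← Complex.ofReal_pow]
      ring
    simp_rw [h1]
    rw [integral_const_mul, gauss_real A _ _ hA, hkey (Real.log t)]
    rw [norm_mul, norm_mul,
      Complex.norm_cpow_eq_rpow_re_of_pos ht', Real.rpow_def_of_pos ht',
      Complex.sub_re, Complex.one_re, Real.exp_add, Real.exp_add]
    simp only [Complex.norm_real, Real.norm_eq_abs, Real.abs_exp]
    ring
  -- Fubini integrability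
  have hGint : Integrable G ((volume : Measure ℝ).prod (volume.restrict (Set.Ioi 0))) := by
    rw [integrable_prod_iff' hGmeas]
    refine ⟨Filter.Eventually.of_forall fun t => hint_x t, ?_⟩
    have hK := hrhs.norm.const_mul (Real.sqrt (π/A) * rexp ((a.re)^2/(4*A)))
    exact hK.congr (Filter.eventuallyEq_of_mem (self_mem_ae_restrict measurableSet_Ioi)
      fun t ht => (hnorm t ht).symm)
  -- step 2 : substitute and swap
  have L1 : (∫ x : ℝ, MellinG Ψ ρ22 (s₂ / 2 + 2 * ((ρ22 : ℂ) - ρ12) * (x : ℂ)) *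
        Complex.exp (-((ρ11 : ℂ) + ρ22 - 2 * ρ12) * (x : ℂ) ^ 2 + a * (x : ℂ)))
      = ∫ x : ℝ, ∫ t in Set.Ioi (0:ℝ), G (x, t) := by
    rw [hadef]
    refine integral_congr_ae (Filter.Eventually.of_forall fun x => ?_)
    simp only [MellinG]
    rw [← integral_mul_const]
    exact setIntegral_congr_fun measurableSet_Ioi (fun t ht => key1 x t ht)
  have L2 : (∫ x : ℝ, ∫ t in Set.Ioi (0:ℝ), G (x, t))
      = ∫ t in Set.Ioi (0:ℝ), ∫ x : ℝ, G (x, t) := integral_integral_swap hGint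
  have comb2 : ∀ (S ψ u v w y : ℂ), v + w + y = u →
      ψ * (S * Complex.exp u) = (S * Complex.exp v) * (Complex.exp w * ψ * Complex.exp y) := by
    intro S ψ u v w y h
    rw [← h, Complex.exp_add, Complex.exp_add]; ring
  have L3 : (∫ t in Set.Ioi (0:ℝ), ∫ x : ℝ, G (x, t))
      = ∫ t in Set.Ioi (0:ℝ),
        (((Real.sqrt (π/A) : ℝ) : ℂ) * Complex.exp (a^2/(4*(A:ℂ)))) *
          ((t:ℂ) ^ (σ₀ - 1) * ((Ψ t : ℝ) : ℂ) * ((rexp (-D * Real.log t ^ 2) : ℝ) : ℂ)) := by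
    refine setIntegral_congr_fun measurableSet_Ioi (fun t ht => ?_)
    have ht' : (0:ℝ) < t := ht
    have ht0 : (t:ℂ) ≠ 0 := Complex.ofReal_ne_zero.mpr (ne_of_gt ht')
    have h2 : ∀ x : ℝ, G (x, t) = (Ψ t : ℂ) *
        Complex.exp (-(A:ℂ) * (x:ℂ)^2 + ((cr:ℂ)*(Real.log t : ℂ) + a)*(x:ℂ)
          + ((Real.log t : ℂ)*(s₂/2-1) + ((-ρ22*Real.log t^2 : ℝ):ℂ))) := by
      intro x
      rw [hGdef]
      simp only
      congr 1
      congr 1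
      ring
    simp_rw [h2]
    rw [integral_const_mul, integral_cexp_quadratic (by simpa using hA) _ _, neg_neg,
      cpow_half_sqrt A hA]
    rw [Complex.cpow_def_of_ne_zero ht0, ← Complex.ofReal_log ht'.le,
      Complex.ofReal_exp (-D * Real.log t ^ 2)]
    apply comb2
    have hDreal : D = ρ22 - cr^2/(4*A) := by
      have hAne0 : ρ11 + ρ22 - 2*ρ12 ≠ 0 := by rw [← hAdef]; exact hA.ne'
      rw [hDdef, hcrdef, hAdef]
      rw [eq_sub_iff_add_eq, div_add_div _ _ hAne0 (by positivity), div_eq_iff (by positivity)]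
      ring
    have hDC : ((D:ℝ) : ℂ) = (ρ22:ℂ) - ((cr:ℝ):ℂ)^2/(4*((A:ℝ):ℂ)) := by
      rw [hDreal]; push_cast; ring
    have hs0C : σ₀ = s₂/2 + ((cr:ℝ):ℂ) * a/(2*((A:ℝ):ℂ)) := by
      rw [hs0]; push_cast; ring
    rw [hs0C]
    simp only [Complex.ofReal_mul, Complex.ofReal_neg, Complex.ofReal_pow]
    rw [hDC]
    ring
  rw [L1, L2, L3, integral_const_mul]
  simp only [MellinG]
  have hACeq : ((A:ℝ) : ℂ) = (ρ11:ℂ) + ρ22 - 2*ρ12 := by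
    rw [hAdef]; push_cast; ring
  congr 2
  rw [← hACeq, hadef]
  ring
end

section
/- For γ > ρ > 0 and s ∈ ℂ, the function M_ρ(s) := ∫₀^∞ t^{s-1} Ψ(t) e^{-ρ log²(t)} dt satisfies the Gaussian convolution (heat-semigroup) identity M_ρ(s) = ∫_{-∞}^∞ M_γ(q) · exp(-(q-s)²/(4(γ-ρ))) / √(4π(γ-ρ)) dq. -/
open MeasureTheory Real Filter
lemma summable_psi {t : ℝ} (ht : 0 < t) :
    Summable (fun n : ℕ => Real.exp (-Real.pi * ((n : ℝ) + 1) ^ 2 * t)) := by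
  have hr0 : (0:ℝ) ≤ Real.exp (-(Real.pi * t)) := (Real.exp_pos _).le
  have hr1 : Real.exp (-(Real.pi * t)) < 1 := by
    rw [Real.exp_lt_one_iff]; nlinarith [Real.pi_pos]
  refine Summable.of_nonneg_of_le (fun n => (Real.exp_pos _).le) (fun n => ?_)
    ((summable_geometric_of_lt_one hr0 hr1).mul_right (Real.exp (-(Real.pi * t))))
  have h1 : Real.exp (-Real.pi * ((n:ℝ)+1)^2 * t) ≤ Real.exp (((n:ℝ)+1) * (-(Real.pi * t))) := by
    apply Real.exp_le_exp.mpr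
    have hn : ((n:ℝ)+1) ≤ ((n:ℝ)+1)^2 := by nlinarith [Nat.cast_nonneg (α:=ℝ) n]
    nlinarith [mul_le_mul_of_nonneg_right hn (mul_pos Real.pi_pos ht).le]
  calc Real.exp (-Real.pi * ((n:ℝ)+1)^2 * t) ≤ Real.exp (((n:ℝ)+1) * (-(Real.pi * t))) := h1
    _ = Real.exp (-(Real.pi*t)) ^ ((n:ℕ)+1) := by
        rw [← Real.exp_nat_mul]; norm_num
    _ = Real.exp (-(Real.pi*t)) ^ n * Real.exp (-(Real.pi*t)) := by rw [pow_succ]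

lemma psi_le {t : ℝ} (ht : 0 < t) : Psi t ≤ (Real.pi * t)⁻¹ := by
  set x := Real.pi * t with hx
  have hx0 : 0 < x := by positivity
  set r := Real.exp (-x) with hr
  have hr0 : (0:ℝ) < r := Real.exp_pos _
  have hr1 : r < 1 := by rw [hr, Real.exp_lt_one_iff]; linarith
  have hsum : Summable (fun n : ℕ => r ^ n * r) :=
    (summable_geometric_of_lt_one hr0.le hr1).mul_right r
  have h1 : Psi t ≤ ∑' n : ℕ, r ^ n * r := by
    refine Summable.tsum_le_tsum (fun n => ?_) (summable_psi ht) hsum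
    have hn : ((n:ℝ)+1) ≤ ((n:ℝ)+1)^2 := by nlinarith [Nat.cast_nonneg (α:=ℝ) n]
    calc Real.exp (-Real.pi * ((n:ℝ)+1)^2 * t) ≤ Real.exp (((n:ℝ)+1) * (-x)) := by
          apply Real.exp_le_exp.mpr
          rw [hx]; nlinarith [mul_le_mul_of_nonneg_right hn (mul_pos Real.pi_pos ht).le]
      _ = r ^ ((n:ℕ)+1) := by rw [hr, ← Real.exp_nat_mul]; norm_num
      _ = r ^ n * r := pow_succ r n
  have h2 : ∑' n : ℕ, r ^ n * r = (1 - r)⁻¹ * r := by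
    rw [tsum_mul_right, tsum_geometric_of_lt_one hr0.le hr1]
  have key : x + 1 ≤ Real.exp x := Real.add_one_le_exp x
  have hrr : Real.exp x * r = 1 := by rw [hr, ← Real.exp_add]; simp
  have h3 : (1 - r)⁻¹ * r ≤ x⁻¹ := by
    rw [mul_comm, ← div_eq_mul_inv, inv_eq_one_div, div_le_div_iff₀ (by linarith) hx0]
    nlinarith
  calc Psi t ≤ (1 - r)⁻¹ * r := h1.trans_eq h2
    _ ≤ x⁻¹ := h3

lemma psi_continuousOn : ContinuousOn Psi (Set.Ioi (0:ℝ)) := by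
  intro t ht
  have ht0 : (0:ℝ) < t := ht
  have h : ContinuousOn Psi (Set.Ioi (t/2)) := by
    refine continuousOn_tsum (fun n => Continuous.continuousOn (by continuity))
      (summable_psi (by linarith : (0:ℝ) < t/2)) (fun n x hx => ?_)
    rw [Real.norm_eq_abs, abs_of_pos (Real.exp_pos _)]
    apply Real.exp_le_exp.mpr
    have hlt : t/2 < x := hx
    have hc : -Real.pi*((n:ℝ)+1)^2 ≤ 0 := by nlinarith [Real.pi_pos, sq_nonneg ((n:ℝ)+1)]
    nlinarith [mul_le_mul_of_nonpos_left hlt.le hc]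
  exact ((h.continuousAt (Ioi_mem_nhds (by linarith))).continuousWithinAt)

lemma integrable_exp_quad {a : ℝ} (ha : 0 < a) (b c : ℝ) :
    Integrable (fun x : ℝ => Real.exp (-a*x^2 + b*x + c)) := by
  have h : ∀ x : ℝ, -a*x^2 + b*x + c = -a*(x - b/(2*a))^2 + (c + b^2/(4*a)) := by
    intro x; field_simp; ring
  simp_rw [h, Real.exp_add]
  exact ((integrable_exp_neg_mul_sq ha).comp_sub_right (b/(2*a))).mul_const _

lemma integral_exp_quad {a : ℝ} (ha : 0 < a) (b c : ℝ) :
    ∫ x : ℝ, Real.exp (-a*x^2 + b*x + c) = Real.exp (c + b^2/(4*a)) * Real.sqrt (Real.pi / a) := by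
  have h : ∀ x : ℝ, -a*x^2 + b*x + c = -a*(x - b/(2*a))^2 + (c + b^2/(4*a)) := by
    intro x; field_simp; ring
  simp_rw [h, Real.exp_add, integral_mul_const]
  rw [integral_sub_right_eq_self (fun x => Real.exp (-a*x^2)) (b/(2*a)), integral_gaussian]
  ring

lemma integrableOn_Ioi_exp_comp (g : ℝ → ℝ) :
    IntegrableOn g (Set.Ioi (0:ℝ)) ↔ Integrable (fun u => Real.exp u * g (Real.exp u)) := by
  have h := integrableOn_image_iff_integrableOn_abs_deriv_smul (f := Real.exp) (f' := Real.exp)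
    MeasurableSet.univ (fun x _ => (Real.hasDerivAt_exp x).hasDerivWithinAt)
    Real.exp_injective.injOn g
  rw [Set.image_univ, Real.range_exp] at h
  simpa [IntegrableOn, abs_of_pos (Real.exp_pos _)] using h

lemma integral_Ioi_exp_comp (g : ℝ → ℝ) :
    ∫ t in Set.Ioi (0:ℝ), g t = ∫ u : ℝ, Real.exp u * g (Real.exp u) := by
  have h := integral_image_eq_integral_abs_deriv_smul (f := Real.exp) (f' := Real.exp)
    MeasurableSet.univ (fun x _ => (Real.hasDerivAt_exp x).hasDerivWithinAt)
    Real.exp_injective.injOn g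
  rw [Set.image_univ, Real.range_exp] at h
  simpa [abs_of_pos (Real.exp_pos _)] using h

lemma key_eq (r c : ℝ) (u : ℝ) :
    Real.exp u * (Real.exp u ^ r * Real.exp (-c * Real.log (Real.exp u) ^ 2))
      = Real.exp (-c*u^2 + (r+1)*u + 0) := by
  rw [Real.log_exp, Real.rpow_def_of_pos (Real.exp_pos u), Real.log_exp,
    ← Real.exp_add, ← Real.exp_add]
  congr 1; ring

lemma key_integrableOn (r : ℝ) {c : ℝ} (hc : 0 < c) :
    IntegrableOn (fun t : ℝ => t ^ r * Real.exp (-c * Real.log t ^ 2)) (Set.Ioi 0) := by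
  rw [integrableOn_Ioi_exp_comp]
  exact (integrable_exp_quad hc (r+1) 0).congr (Filter.Eventually.of_forall
    (fun u => (key_eq r c u).symm))

lemma key_integral (r : ℝ) {c : ℝ} (hc : 0 < c) :
    ∫ t in Set.Ioi (0:ℝ), t ^ r * Real.exp (-c * Real.log t ^ 2)
      = Real.exp ((r+1)^2/(4*c)) * Real.sqrt (Real.pi / c) := by
  rw [integral_Ioi_exp_comp (fun t : ℝ => t ^ r * Real.exp (-c * Real.log t ^ 2))]
  simp only [key_eq r c]
  rw [integral_exp_quad hc (r+1) 0]
  norm_num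

noncomputable def Mrho (ρ : ℝ) (s : ℂ) : ℂ :=
  ∫ t in Set.Ioi (0:ℝ), (t : ℂ) ^ (s - 1) * (Psi t : ℂ) * (Real.exp (-ρ * Real.log t ^ 2) : ℂ)

theorem stmt9 (ρ γ : ℝ) (hρ : 0 < ρ) (h : ρ < γ) (s : ℂ) :
    Mrho ρ s = ∫ q : ℝ, Mrho γ (q : ℂ) *
      Complex.exp (-((q : ℂ) - s) ^ 2 / (4 * ((γ : ℂ) - ρ))) /
      (Real.sqrt (4 * Real.pi * (γ - ρ)) : ℂ) := by
  have hγ : 0 < γ := hρ.trans h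
  set β : ℝ := γ - ρ with hβ
  have hβ0 : 0 < β := by rw [hβ]; linarith
  set S : ℝ := Real.sqrt (4 * Real.pi * β) with hS
  have hS0 : 0 < S := Real.sqrt_pos.mpr (by positivity)
  set Bc : ℂ := ((β : ℝ) : ℂ) with hBc
  have hBc0 : Bc ≠ 0 := by rw [hBc]; exact_mod_cast hβ0.ne'
  have hB : (γ : ℂ) - (ρ : ℂ) = Bc := by rw [hBc, hβ]; push_cast; ring
  set F : ℝ → ℝ → ℂ := fun q t =>
    Complex.exp ((Real.log t : ℂ) * ((q : ℂ) - 1)) * (Psi t : ℂ)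
      * (Real.exp (-γ * Real.log t ^ 2) : ℂ)
      * (Complex.exp (-((q : ℂ) - s) ^ 2 / (4 * Bc)) / (S : ℂ)) with hF
  set Cq : ℝ → ℝ := fun q => Real.exp ((s.im ^ 2 - (q - s.re) ^ 2) / (4 * β)) / S with hCq
  -- norm of the kernel
  have hKnorm : ∀ q : ℝ, ‖Complex.exp (-((q : ℂ) - s) ^ 2 / (4 * Bc)) / (S : ℂ)‖ = Cq q := by
    intro q
    rw [hCq]
    rw [norm_div, Complex.norm_exp]
    have h4 : (4 : ℂ) * Bc = ((4 * β : ℝ) : ℂ) := by rw [hBc]; push_cast; ring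
    have hre : (-((q : ℂ) - s) ^ 2 / ((4 : ℂ) * Bc)).re
        = (s.im ^ 2 - (q - s.re) ^ 2) / (4 * β) := by
      rw [h4, Complex.div_ofReal_re]
      congr 1
      simp only [Complex.neg_re, pow_two, Complex.mul_re, Complex.sub_re, Complex.sub_im,
        Complex.ofReal_re, Complex.ofReal_im]
      ring
    rw [hre, Complex.norm_real, Real.norm_eq_abs, abs_of_pos hS0]
  -- norm of F
  have hFnorm : ∀ q : ℝ, ∀ t ∈ Set.Ioi (0 : ℝ), ‖F q t‖
      = t ^ (q - 1) * Psi t * Real.exp (-γ * Real.log t ^ 2) * Cq q := by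
    intro q t ht
    have ht0 : (0 : ℝ) < t := ht
    rw [hF]
    simp only []
    rw [norm_mul, norm_mul, norm_mul, hKnorm q]
    congr 2
    · congr 1
      · rw [Complex.norm_exp]
        have : (((Real.log t : ℝ) : ℂ) * ((q : ℂ) - 1)).re = Real.log t * (q - 1) := by
          rw [Complex.re_ofReal_mul]
          simp
        rw [this, Real.rpow_def_of_pos ht0]
      · rw [Complex.norm_real, Real.norm_eq_abs, abs_of_nonneg (psi_nonneg t)]
    · rw [Complex.norm_real, Real.norm_eq_abs, abs_of_pos (Real.exp_pos _)]
  -- pointwise bound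
  have hptbd : ∀ q : ℝ, ∀ t ∈ Set.Ioi (0 : ℝ), ‖F q t‖
      ≤ Real.pi⁻¹ * Cq q * (t ^ (q - 2) * Real.exp (-γ * Real.log t ^ 2)) := by
    intro q t ht
    have ht0 : (0 : ℝ) < t := ht
    have hCq0 : 0 < Cq q := by rw [hCq]; positivity
    rw [hFnorm q t ht]
    have h2 : t ^ (q - 1) * (Real.pi * t)⁻¹ = Real.pi⁻¹ * t ^ (q - 2) := by
      have hq : t ^ (q - 1) = t ^ (q - 2) * t := by
        rw [← Real.rpow_add_one ht0.ne' (q - 2)]; congr 1; ring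
      rw [hq, mul_inv]; field_simp
    calc t ^ (q - 1) * Psi t * Real.exp (-γ * Real.log t ^ 2) * Cq q
        ≤ t ^ (q - 1) * (Real.pi * t)⁻¹ * Real.exp (-γ * Real.log t ^ 2) * Cq q := by
          gcongr
          exact psi_le ht0
      _ = Real.pi⁻¹ * Cq q * (t ^ (q - 2) * Real.exp (-γ * Real.log t ^ 2)) := by
          rw [h2]; ring
  -- measurability of F q for fixed q
  have hFq_meas : ∀ q : ℝ, AEStronglyMeasurable (F q) (volume.restrict (Set.Ioi 0)) := by
    intro q
    refine ContinuousOn.aestronglyMeasurable ?_ measurableSet_Ioi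
    rw [hF]
    have hlog : ContinuousOn Real.log (Set.Ioi (0:ℝ)) :=
      Real.continuousOn_log.mono (fun x hx => ne_of_gt hx)
    apply ContinuousOn.mul
    apply ContinuousOn.mul
    apply ContinuousOn.mul
    · exact Complex.continuous_exp.comp_continuousOn
        ((Complex.continuous_ofReal.comp_continuousOn hlog).mul continuousOn_const)
    · exact Complex.continuous_ofReal.comp_continuousOn psi_continuousOn
    · refine Complex.continuous_ofReal.comp_continuousOn
        (Real.continuous_exp.comp_continuousOn ?_)
      exact (continuousOn_const.mul (hlog.pow 2))
    · exact continuousOn_const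
  -- measurability of uncurry F
  have hFae : AEStronglyMeasurable (Function.uncurry F)
      (volume.prod (volume.restrict (Set.Ioi 0))) := by
    have hmeq : (volume : Measure ℝ).prod ((volume : Measure ℝ).restrict (Set.Ioi 0))
        = ((volume : Measure ℝ).prod volume).restrict (Set.univ ×ˢ Set.Ioi 0) := by
      rw [← Measure.prod_restrict, Measure.restrict_univ]
    rw [hmeq]
    refine ContinuousOn.aestronglyMeasurable ?_ (MeasurableSet.univ.prod measurableSet_Ioi)
    rw [hF]
    have hlog : ContinuousOn (fun p : ℝ × ℝ => Real.log p.2) (Set.univ ×ˢ Set.Ioi 0) :=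
      Real.continuousOn_log.comp continuous_snd.continuousOn
        (fun p hp => ne_of_gt (hp.2 : (0:ℝ) < p.2))
    have hpsi : ContinuousOn (fun p : ℝ × ℝ => Psi p.2) (Set.univ ×ˢ Set.Ioi 0) :=
      psi_continuousOn.comp continuous_snd.continuousOn (fun p hp => hp.2)
    apply ContinuousOn.mul
    apply ContinuousOn.mul
    apply ContinuousOn.mul
    · refine Complex.continuous_exp.comp_continuousOn ?_
      refine (Complex.continuous_ofReal.comp_continuousOn hlog).mul ?_
      exact ((Complex.continuous_ofReal.comp continuous_fst).sub continuous_const).continuousOn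
    · exact Complex.continuous_ofReal.comp_continuousOn hpsi
    · refine Complex.continuous_ofReal.comp_continuousOn
        (Real.continuous_exp.comp_continuousOn ?_)
      exact continuousOn_const.mul (hlog.pow 2)
    · refine Continuous.continuousOn ?_
      apply Continuous.div_const
      refine Complex.continuous_exp.comp ?_
      fun_prop
  -- integrability of uncurry F
  have hInt : Integrable (Function.uncurry F) (volume.prod (volume.restrict (Set.Ioi 0))) := by
    rw [MeasureTheory.integrable_prod_iff hFae]
    constructor
    · refine Filter.Eventually.of_forall fun (q : ℝ) => ?_
      refine Integrable.mono' ((key_integrableOn (q - 2) hγ).const_mul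
        (Real.pi⁻¹ * Cq q)) (hFq_meas q) ?_
      rw [ae_restrict_iff' measurableSet_Ioi]
      exact Filter.Eventually.of_forall (hptbd q)
    · set A : ℝ := (4 * β)⁻¹ - (4 * γ)⁻¹ with hA
      have hA0 : 0 < A := by
        rw [hA, sub_pos]
        apply inv_strictAnti₀ (by positivity)
        linarith
      set B' : ℝ := 2 * s.re * (4 * β)⁻¹ - 2 * (4 * γ)⁻¹ with hB'
      set C' : ℝ := (4 * γ)⁻¹ + (s.im ^ 2 - s.re ^ 2) * (4 * β)⁻¹ with hC'
      have hexp_eq : ∀ q : ℝ, -A * q ^ 2 + B' * q + C'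
          = (q - 1) ^ 2 / (4 * γ) + (s.im ^ 2 - (q - s.re) ^ 2) / (4 * β) := by
        intro q
        rw [hA, hB', hC']
        field_simp
        ring
      set g0 : ℝ → ℝ := fun q =>
        Real.exp ((q - 1) ^ 2 / (4 * γ)) * Real.sqrt (Real.pi / γ) * Real.pi⁻¹ * Cq q with hg0
      have hg0int : Integrable g0 := by
        refine ((integrable_exp_quad hA0 B' C').const_mul
          (Real.sqrt (Real.pi / γ) * Real.pi⁻¹ / S)).congr
          (Filter.Eventually.of_forall fun q => ?_)
        simp only [hg0, hCq]
        rw [hexp_eq q, Real.exp_add]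
        ring
      refine Integrable.mono' hg0int hFae.norm.integral_prod_right'
        (Filter.Eventually.of_forall fun (q : ℝ) => ?_)
      rw [Real.norm_eq_abs, abs_of_nonneg (integral_nonneg (fun t => norm_nonneg _))]
      have hCq0 : 0 < Cq q := by rw [hCq]; positivity
      have hg0pos : 0 < g0 q := by rw [hg0]; positivity
      show (∫ t in Set.Ioi (0:ℝ), ‖F q t‖) ≤ g0 q
      by_cases hq : Integrable (fun t => ‖F q t‖) (volume.restrict (Set.Ioi 0))
      · calc (∫ t in Set.Ioi (0:ℝ), ‖F q t‖)
            ≤ ∫ t in Set.Ioi (0:ℝ),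
                Real.pi⁻¹ * Cq q * (t ^ (q - 2) * Real.exp (-γ * Real.log t ^ 2)) := by
              refine setIntegral_mono_on hq ((key_integrableOn (q - 2) hγ).const_mul _)
                measurableSet_Ioi (hptbd q)
          _ = Real.pi⁻¹ * Cq q
                * (Real.exp ((q - 2 + 1) ^ 2 / (4 * γ)) * Real.sqrt (Real.pi / γ)) := by
              rw [integral_const_mul, key_integral (q - 2) hγ]
          _ ≤ g0 q := by
              rw [show q - 2 + 1 = q - 1 by ring, hg0]; apply le_of_eq; ring
      · rw [integral_undef hq]
        exact hg0pos.le
  -- step A : rewrite RHS as double integral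
  have stepA : (∫ q : ℝ, Mrho γ (q : ℂ) *
        Complex.exp (-((q : ℂ) - s) ^ 2 / (4 * ((γ : ℂ) - ρ))) / (S : ℂ))
      = ∫ q : ℝ, ∫ t in Set.Ioi (0:ℝ), F q t := by
    refine integral_congr_ae (Filter.Eventually.of_forall fun q => ?_)
    simp only [Mrho]
    rw [hB, mul_div_assoc, ← integral_mul_const]
    refine setIntegral_congr_fun measurableSet_Ioi fun t ht => ?_
    have ht0 : (0 : ℝ) < t := ht
    rw [hF]
    simp only []
    rw [Complex.cpow_def_of_ne_zero (Complex.ofReal_ne_zero.mpr ht0.ne'),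
      ← Complex.ofReal_log ht0.le]
  -- step C : inner integral computation
  have stepC : (∫ t in Set.Ioi (0:ℝ), ∫ q : ℝ, F q t) = Mrho ρ s := by
    simp only [Mrho]
    refine setIntegral_congr_fun measurableSet_Ioi fun t ht => ?_
    have ht0 : (0 : ℝ) < t := ht
    set L : ℝ := Real.log t with hL
    set b1 : ℂ := ((-(4 * β)⁻¹ : ℝ) : ℂ) with hb1
    have h4β : (0:ℝ) < (4 * β)⁻¹ := by positivity
    have hb1re : b1.re < 0 := by
      rw [hb1, Complex.ofReal_re]; linarith
    have hb1ne : b1 ≠ 0 := by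
      rw [hb1, ne_eq, Complex.ofReal_eq_zero, neg_eq_zero]
      positivity
    set c1 : ℂ := (L : ℂ) + s / (2 * Bc) with hc1
    set d1 : ℂ := -(L : ℂ) - s ^ 2 / (4 * Bc) with hd1
    have hre : ∀ q : ℝ, F q t = ((Psi t : ℂ) * (Real.exp (-γ * L ^ 2) : ℂ) / (S : ℂ))
        * Complex.exp (b1 * (q : ℂ) ^ 2 + c1 * (q : ℂ) + d1) := by
      intro q
      rw [hF]
      simp only []
      have hexp : Complex.exp ((L : ℂ) * ((q : ℂ) - 1))
            * Complex.exp (-((q : ℂ) - s) ^ 2 / (4 * Bc))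
          = Complex.exp (b1 * (q : ℂ) ^ 2 + c1 * (q : ℂ) + d1) := by
        rw [← Complex.exp_add]
        congr 1
        rw [hb1, hc1, hd1, hBc]
        have hne : ((β : ℝ) : ℂ) ≠ 0 := Complex.ofReal_ne_zero.mpr hβ0.ne'
        push_cast
        field_simp
        ring
      calc Complex.exp ((L : ℂ) * ((q : ℂ) - 1)) * (Psi t : ℂ)
            * (Real.exp (-γ * L ^ 2) : ℂ)
            * (Complex.exp (-((q : ℂ) - s) ^ 2 / (4 * Bc)) / (S : ℂ))
          = ((Psi t : ℂ) * (Real.exp (-γ * L ^ 2) : ℂ) / (S : ℂ))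
            * (Complex.exp ((L : ℂ) * ((q : ℂ) - 1))
              * Complex.exp (-((q : ℂ) - s) ^ 2 / (4 * Bc))) := by ring
        _ = _ := by rw [hexp]
    rw [integral_congr_ae (Filter.Eventually.of_forall hre), integral_const_mul,
      integral_cexp_quadratic hb1re c1 d1]
    have h1 : ((Real.pi : ℂ) / -b1) = ((4 * Real.pi * β : ℝ) : ℂ) := by
      rw [hb1]
      push_cast
      have : (4 * β : ℝ) ≠ 0 := by positivity
      field_simp
    have h2 : (((4 * Real.pi * β : ℝ) : ℂ)) ^ (1 / 2 : ℂ) = ((S : ℝ) : ℂ) := by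
      rw [hS, Real.sqrt_eq_rpow, Complex.ofReal_cpow (by positivity)]
      norm_num
    have h3 : Complex.exp (d1 - c1 ^ 2 / (4 * b1))
        = Complex.exp ((s - 1) * (L : ℂ) + Bc * (L : ℂ) ^ 2) := by
      congr 1
      rw [hd1, hc1, hb1, hBc]
      have hne : ((β : ℝ) : ℂ) ≠ 0 := Complex.ofReal_ne_zero.mpr hβ0.ne'
      push_cast
      field_simp
      ring
    have h4 : Complex.exp ((s - 1) * (L : ℂ) + Bc * (L : ℂ) ^ 2)
        = (t : ℂ) ^ (s - 1) * (Real.exp (β * L ^ 2) : ℂ) := by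
      rw [Complex.exp_add]
      congr 1
      · rw [Complex.cpow_def_of_ne_zero (Complex.ofReal_ne_zero.mpr ht0.ne'),
          ← Complex.ofReal_log ht0.le, mul_comm]
      · rw [hBc, Complex.ofReal_exp]
        push_cast
        ring_nf
    rw [h1, h2, h3, h4]
    have hSne : ((S : ℝ) : ℂ) ≠ 0 := Complex.ofReal_ne_zero.mpr hS0.ne'
    have h5 : (Real.exp (-γ * L ^ 2) : ℂ) * (Real.exp (β * L ^ 2) : ℂ)
        = (Real.exp (-ρ * L ^ 2) : ℂ) := by
      rw [← Complex.ofReal_mul, ← Real.exp_add]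
      congr 2
      rw [hβ]; ring
    rw [div_mul_eq_mul_div, mul_comm ((S:ℝ):ℂ), mul_div_assoc, mul_div_assoc,
      div_self hSne, mul_one]
    linear_combination (↑(Psi t) * (t:ℂ) ^ (s - 1)) * h5
  calc Mrho ρ s = ∫ t in Set.Ioi (0:ℝ), ∫ q : ℝ, F q t := stepC.symm
    _ = ∫ q : ℝ, ∫ t in Set.Ioi (0:ℝ), F q t := (MeasureTheory.integral_integral_swap hInt).symm
    _ = _ := stepA.symm
end

section
/- For ρ > 0 and s ∈ ℂ, the 'symmetrized kernel' identity holds: ∫_{1/2}^{s} sinh((s-t)/(16ρ)) · e^{(-t²+t)/(16ρ)} · M[(Δ₄Ψ)e^{-ρlog²}](t/2) dt = ∫_{1/2}^{1-s} sinh((1-s-t)/(16ρ)) · e^{(-t²+t)/(16ρ)} · M[(Δ₄Ψ)e^{-ρlog²}](t/2) dt; i.e. the function s ↦ ∫_{1/2}^{s} sinh((s-t)/(16ρ)) e^{(-t²+t)/(16ρ)} M[(Δ₄Ψ)e^{-ρlog²}](t/2) dt is invariant under s → 1-s. -/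
open MeasureTheory Real Filter

noncomputable def MD4 (ρ : ℝ) (σ : ℂ) : ℂ :=
  ∫ t in Set.Ioi (0:ℝ), (t : ℂ) ^ (σ - 1) *
    ((8 * (2 * t ^ 2 * deriv (deriv Psi) t + 3 * t * deriv Psi t) : ℝ) : ℂ) *
    (Real.exp (-ρ * Real.log t ^ 2) : ℂ)

/-- `∫_{1/2}^s sinh((s-t)/(16ρ)) e^{(-t²+t)/(16ρ)} M[(Δ₄Ψ)e^{-ρlog²}](t/2) dt`
along the straight path from `1/2` to `s`. -/
noncomputable def Ifun (ρ : ℝ) (s : ℂ) : ℂ :=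
  ∫ u in (0:ℝ)..1, (s - 1/2) *
    (Complex.sinh ((s - (1/2 + u * (s - 1/2))) / (16 * (ρ : ℂ))) *
      Complex.exp ((-(1/2 + u * (s - 1/2)) ^ 2 + (1/2 + u * (s - 1/2))) / (16 * (ρ : ℂ))) *
      MD4 ρ ((1/2 + u * (s - 1/2)) / 2))

namespace Aux17

open Complex

/-- The classical Jacobi theta function restricted to the imaginary axis (as a function of a
complex variable `w`, evaluated at `w * I`). -/
noncomputable def Th : ℂ → ℂ := fun w => jacobiTheta (w * I)

def V : Set ℂ := {w : ℂ | 0 < w.re}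

lemma isOpen_V : IsOpen V := isOpen_lt continuous_const Complex.continuous_re

lemma mem_V {t : ℝ} (ht : 0 < t) : (t : ℂ) ∈ V := by simpa [V] using ht

lemma anTh : AnalyticOnNhd ℂ Th V := by
  apply DifferentiableOn.analyticOnNhd _ isOpen_V
  intro w hw
  have h1 : DifferentiableAt ℂ jacobiTheta (w * I) :=
    differentiableAt_jacobiTheta (by simpa [Complex.mul_I_im, V] using hw)
  exact (h1.comp w ((differentiableAt_id).mul_const I)).differentiableWithinAt

lemma anTh' : AnalyticOnNhd ℂ (deriv Th) V := anTh.deriv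

lemma Th_real {t : ℝ} (ht : 0 < t) : Th t = ((1 + 2 * Psi t : ℝ) : ℂ) := by
  have him : 0 < ((t : ℂ) * I).im := by simpa [Complex.mul_I_im] using ht
  rw [Th, jacobiTheta_eq_tsum_nat him]
  have h : ∀ n : ℕ, cexp (↑π * I * ((n : ℂ) + 1) ^ 2 * ((t:ℂ) * I))
      = ((Real.exp (-Real.pi * ((n : ℝ) + 1) ^ 2 * t) : ℝ) : ℂ) := by
    intro n
    rw [Complex.ofReal_exp]
    congr 1
    push_cast
    linear_combination (π * ((n:ℂ)+1)^2 * (t:ℂ)) * Complex.I_sq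
  simp_rw [h]
  rw [← Complex.ofReal_tsum]
  rw [show (∑' n : ℕ, Real.exp (-Real.pi * ((n : ℝ) + 1) ^ 2 * t)) = Psi t from rfl]
  push_cast
  ring

lemma hasDerivAt_Th {t : ℝ} (ht : 0 < t) :
    HasDerivAt (fun u : ℝ => Th u) (deriv Th t) t :=
  ((anTh _ (mem_V ht)).differentiableAt.hasDerivAt).comp_ofReal

lemma hasDerivAt_Th' {t : ℝ} (ht : 0 < t) :
    HasDerivAt (fun u : ℝ => deriv Th u) (deriv (deriv Th) t) t :=
  ((anTh' _ (mem_V ht)).differentiableAt.hasDerivAt).comp_ofReal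

lemma deriv_Psi {t : ℝ} (ht : 0 < t) : deriv Psi t = (deriv Th t).re / 2 := by
  have hev : Psi =ᶠ[nhds t] fun u => ((Th u).re - 1) / 2 := by
    filter_upwards [isOpen_Ioi.mem_nhds ht] with u hu
    rw [Th_real hu]
    simp only [Complex.ofReal_re]
    ring
  rw [hev.deriv_eq]
  have h : HasDerivAt (fun u : ℝ => ((Th u).re - 1) / 2) ((deriv Th t).re / 2) t :=
    ((((anTh _ (mem_V ht)).differentiableAt.hasDerivAt).real_of_complex).sub_const 1).div_const 2
  exact h.deriv

lemma deriv2_Psi {t : ℝ} (ht : 0 < t) :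
    deriv (deriv Psi) t = (deriv (deriv Th) t).re / 2 := by
  have hev : deriv Psi =ᶠ[nhds t] fun u => (deriv Th u).re / 2 := by
    filter_upwards [isOpen_Ioi.mem_nhds ht] with u hu
    exact deriv_Psi hu
  rw [hev.deriv_eq]
  have h : HasDerivAt (fun u : ℝ => (deriv Th u).re / 2) ((deriv (deriv Th) t).re / 2) t :=
    (((anTh' _ (mem_V ht)).differentiableAt.hasDerivAt).real_of_complex).div_const 2
  exact h.deriv

lemma Th_FE {t : ℝ} (ht : 0 < t) :
    Th ((t⁻¹ : ℝ) : ℂ) = ((Real.sqrt t : ℝ) : ℂ) * Th t := by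
  have him : 0 < ((t : ℂ) * I).im := by simpa [Complex.mul_I_im] using ht
  have key := jacobiTheta_S_smul (UpperHalfPlane.mk ((t : ℂ) * I) him)
  rw [UpperHalfPlane.modular_S_smul] at key
  simp only [UpperHalfPlane.coe_mk] at key
  have ht0 : (t : ℂ) ≠ 0 := Complex.ofReal_ne_zero.mpr ht.ne'
  rw [show ((-((t:ℂ) * I))⁻¹ : ℂ) = ((t⁻¹ : ℝ) : ℂ) * I by
    rw [inv_neg, mul_inv, Complex.inv_I]
    push_cast
    ring] at key
  rw [show (-I * ((t:ℂ) * I)) ^ ((1:ℂ)/2) = ((Real.sqrt t : ℝ) : ℂ) by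
    rw [show (-I * ((t:ℂ) * I)) = (t:ℂ) from by linear_combination (-(t:ℂ)) * Complex.I_sq]
    rw [Real.sqrt_eq_rpow, Complex.ofReal_cpow ht.le]
    norm_num] at key
  exact key

lemma eq1 {t : ℝ} (ht : 0 < t) :
    (-(t^2)⁻¹ : ℝ) • deriv Th ((t⁻¹ : ℝ) : ℂ) =
      ((1/(2*Real.sqrt t) : ℝ) : ℂ) * Th t + ((Real.sqrt t : ℝ) : ℂ) * deriv Th t := by
  have h₁ : HasDerivAt (fun u : ℝ => Th ((u⁻¹ : ℝ) : ℂ))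
      ((-(t^2)⁻¹ : ℝ) • deriv Th ((t⁻¹ : ℝ) : ℂ)) t :=
    HasDerivAt.scomp t (hasDerivAt_Th (inv_pos.mpr ht)) (hasDerivAt_inv ht.ne')
  have h₂ : HasDerivAt (fun u : ℝ => ((Real.sqrt u : ℝ) : ℂ) * Th u)
      (((1/(2*Real.sqrt t) : ℝ) : ℂ) * Th t + ((Real.sqrt t : ℝ) : ℂ) * deriv Th t) t :=
    ((Real.hasDerivAt_sqrt ht.ne').ofReal_comp).mul (hasDerivAt_Th ht)
  have hev : (fun u : ℝ => Th ((u⁻¹ : ℝ) : ℂ)) =ᶠ[nhds t]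
      (fun u : ℝ => ((Real.sqrt u : ℝ) : ℂ) * Th u) := by
    filter_upwards [isOpen_Ioi.mem_nhds ht] with u hu
    exact Th_FE hu
  have := hev.deriv_eq
  rwa [h₁.deriv, h₂.deriv] at this

lemma eq2 {t : ℝ} (ht : 0 < t) :
    (-(t^2)⁻¹ : ℝ) • ((-(t^2)⁻¹ : ℝ) • deriv (deriv Th) ((t⁻¹ : ℝ) : ℂ)) +
      (2/t^3 : ℝ) • deriv Th ((t⁻¹ : ℝ) : ℂ) =
    ((-1/(4*t*Real.sqrt t) : ℝ) : ℂ) * Th t + ((1/(2*Real.sqrt t) : ℝ) : ℂ) * deriv Th t +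
      (((1/(2*Real.sqrt t) : ℝ) : ℂ) * deriv Th t +
        ((Real.sqrt t : ℝ) : ℂ) * deriv (deriv Th) t) := by
  have hs0 : Real.sqrt t ≠ 0 := (Real.sqrt_pos.mpr ht).ne'
  have ha : HasDerivAt (fun u : ℝ => (-(u^2)⁻¹ : ℝ)) (2/t^3) t := by
    have := ((hasDerivAt_pow 2 t).inv (pow_ne_zero 2 ht.ne')).neg
    refine this.congr_deriv ?_
    field_simp
    ring
  have hv : HasDerivAt (fun u : ℝ => deriv Th ((u⁻¹ : ℝ) : ℂ))
      ((-(t^2)⁻¹ : ℝ) • deriv (deriv Th) ((t⁻¹ : ℝ) : ℂ)) t :=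
    HasDerivAt.scomp t (hasDerivAt_Th' (inv_pos.mpr ht)) (hasDerivAt_inv ht.ne')
  have h₁ : HasDerivAt (fun u : ℝ => (-(u^2)⁻¹ : ℝ) • deriv Th ((u⁻¹ : ℝ) : ℂ))
      ((-(t^2)⁻¹ : ℝ) • ((-(t^2)⁻¹ : ℝ) • deriv (deriv Th) ((t⁻¹ : ℝ) : ℂ)) +
        (2/t^3 : ℝ) • deriv Th ((t⁻¹ : ℝ) : ℂ)) t :=
    ha.smul hv
  have hc : HasDerivAt (fun u : ℝ => (1/(2*Real.sqrt u) : ℝ)) (-1/(4*t*Real.sqrt t)) t := by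
    have h2 : HasDerivAt (fun u : ℝ => (2*Real.sqrt u : ℝ)) (2*(1/(2*Real.sqrt t))) t :=
      (Real.hasDerivAt_sqrt ht.ne').const_mul 2
    have h3 := h2.inv (by positivity)
    simp only [one_div]
    refine h3.congr_deriv ?_
    rw [eq_div_iff (by positivity)]
    field_simp
    nlinarith [Real.sq_sqrt ht.le, Real.sqrt_pos.mpr ht]
  have h₂ : HasDerivAt (fun u : ℝ => ((1/(2*Real.sqrt u) : ℝ) : ℂ) * Th u +
        ((Real.sqrt u : ℝ) : ℂ) * deriv Th u)
      (((-1/(4*t*Real.sqrt t) : ℝ) : ℂ) * Th t + ((1/(2*Real.sqrt t) : ℝ) : ℂ) * deriv Th t +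
        (((1/(2*Real.sqrt t) : ℝ) : ℂ) * deriv Th t +
          ((Real.sqrt t : ℝ) : ℂ) * deriv (deriv Th) t)) t :=
    ((hc.ofReal_comp).mul (hasDerivAt_Th ht)).add
      (((Real.hasDerivAt_sqrt ht.ne').ofReal_comp).mul (hasDerivAt_Th' ht))
  have hev : (fun u : ℝ => (-(u^2)⁻¹ : ℝ) • deriv Th ((u⁻¹ : ℝ) : ℂ)) =ᶠ[nhds t]
      (fun u : ℝ => ((1/(2*Real.sqrt u) : ℝ) : ℂ) * Th u +
        ((Real.sqrt u : ℝ) : ℂ) * deriv Th u) := by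
    filter_upwards [isOpen_Ioi.mem_nhds ht] with u hu
    exact eq1 hu
  have := hev.deriv_eq
  rwa [h₁.deriv, h₂.deriv] at this

lemma Dc_inv {t : ℝ} (ht : 0 < t) :
    4*(2*((t⁻¹ : ℝ) : ℂ)^2 * deriv (deriv Th) ((t⁻¹ : ℝ) : ℂ)
        + 3*((t⁻¹ : ℝ) : ℂ) * deriv Th ((t⁻¹ : ℝ) : ℂ))
      = ((Real.sqrt t : ℝ) : ℂ) *
        (4*(2*((t : ℝ) : ℂ)^2 * deriv (deriv Th) ((t : ℝ) : ℂ)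
          + 3*((t : ℝ) : ℂ) * deriv Th ((t : ℝ) : ℂ))) := by
  have e1 := eq1 ht
  have e2 := eq2 ht
  have hRc : ((Real.sqrt t : ℝ) : ℂ) ≠ 0 := by
    simpa using (Real.sqrt_pos.mpr ht).ne'
  have hT : ((t : ℝ) : ℂ) = ((Real.sqrt t : ℝ) : ℂ)^2 := by
    rw [← Complex.ofReal_pow, Real.sq_sqrt ht.le]
  simp only [Complex.real_smul] at e1 e2
  push_cast at e1 e2 ⊢
  rw [hT] at e1 e2 ⊢
  set RC := ((Real.sqrt t : ℝ) : ℂ) with hRC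
  have h2R : (2*RC) ≠ 0 := by simpa using hRc
  field_simp at e1 e2
  have hB' : deriv Th (1 / RC^2) = -(RC^3/2) * Th (RC^2) - RC^5 * deriv Th (RC^2) := by
    apply mul_left_cancel₀ (a := (-2)*RC) (by simpa using hRc)
    linear_combination RC * e1
  have hC' : deriv (deriv Th) (1 / RC^2) =
      (3/4)*RC^5 * Th (RC^2) + 3*RC^7 * deriv Th (RC^2) + RC^9 * deriv (deriv Th) (RC^2) := by
    apply mul_left_cancel₀ (a := 8*RC^10) (by simp [hRc])
    linear_combination RC^10 * e2 + 8*RC^12*e1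
  rw [show ((RC^2)⁻¹ : ℂ) = 1 / RC^2 from (one_div _).symm] at *
  rw [hB', hC']
  field_simp
  ring

lemma re_comb (a : ℝ) (z w : ℂ) :
    ((4:ℂ)*(2*((a : ℝ) : ℂ)^2*z + 3*((a : ℝ) : ℂ)*w)).re = 4*(2*a^2*z.re + 3*a*w.re) := by
  simp [Complex.mul_re, Complex.add_re, Complex.mul_im, ← Complex.ofReal_pow]
  try ring

lemma D_inv {t : ℝ} (ht : 0 < t) :
    8*(2*(t⁻¹)^2*deriv (deriv Psi) t⁻¹ + 3*t⁻¹*deriv Psi t⁻¹)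
      = Real.sqrt t * (8*(2*t^2*deriv (deriv Psi) t + 3*t*deriv Psi t)) := by
  have h := congrArg Complex.re (Dc_inv ht)
  rw [Complex.re_ofReal_mul, re_comb, re_comb] at h
  rw [deriv_Psi (inv_pos.mpr ht), deriv2_Psi (inv_pos.mpr ht), deriv_Psi ht, deriv2_Psi ht]
  linear_combination h

lemma MD4_symm (ρ : ℝ) (σ : ℂ) : MD4 ρ σ = MD4 ρ (1/2 - σ) := by
  have key := MeasureTheory.integral_comp_rpow_Ioi
    (fun t : ℝ => (t : ℂ) ^ (σ - 1) *
      ((8 * (2 * t ^ 2 * deriv (deriv Psi) t + 3 * t * deriv Psi t) : ℝ) : ℂ) *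
      (Real.exp (-ρ * Real.log t ^ 2) : ℂ)) (p := -1) (by norm_num)
  rw [MD4, MD4, ← key]
  apply MeasureTheory.setIntegral_congr_fun measurableSet_Ioi
  intro x hx
  have hx0 : (0:ℝ) < x := hx
  have hxC : (x : ℂ) ≠ 0 := Complex.ofReal_ne_zero.mpr hx0.ne'
  have harg : (x : ℂ).arg ≠ π := by
    rw [Complex.arg_ofReal_of_nonneg hx0.le]
    exact Real.pi_ne_zero.symm
  dsimp only
  rw [show (x : ℝ) ^ (-1 : ℝ) = x⁻¹ by
    rw [Real.rpow_neg hx0.le, Real.rpow_one]]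
  rw [D_inv hx0, Real.log_inv, neg_sq]
  rw [Complex.real_smul]
  rw [show ((x⁻¹ : ℝ) : ℂ) = ((x:ℂ))⁻¹ by push_cast; ring]
  rw [Complex.inv_cpow _ _ harg, ← Complex.cpow_neg]
  have h1 : ((|(-1:ℝ)| * x ^ ((-1:ℝ) - 1) : ℝ) : ℂ) = (x : ℂ) ^ ((-2 : ℝ) : ℂ) := by
    rw [show |(-1:ℝ)| = 1 by norm_num, one_mul,
      show ((-1:ℝ) - 1) = (-2 : ℝ) by norm_num]
    exact Complex.ofReal_cpow hx0.le (-2)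
  rw [h1]
  have h2 : ((Real.sqrt x * (8 * (2 * x ^ 2 * deriv (deriv Psi) x + 3 * x * deriv Psi x)) : ℝ) : ℂ)
      = (x : ℂ) ^ (((1:ℝ)/2 : ℝ) : ℂ) *
        ((8 * (2 * x ^ 2 * deriv (deriv Psi) x + 3 * x * deriv Psi x) : ℝ) : ℂ) := by
    rw [Complex.ofReal_mul]
    congr 1
    rw [Real.sqrt_eq_rpow]
    exact Complex.ofReal_cpow hx0.le _
  rw [h2]
  rw [show ((x:ℂ) ^ ((-2:ℝ):ℂ)) * ((x:ℂ) ^ (-(σ-1)) *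
        ((x:ℂ) ^ (((1:ℝ)/2 : ℝ) : ℂ) *
          ((8 * (2 * x ^ 2 * deriv (deriv Psi) x + 3 * x * deriv Psi x) : ℝ) : ℂ)) *
        ((Real.exp (-ρ * Real.log x ^ 2) : ℝ) : ℂ))
      = ((x:ℂ) ^ ((-2:ℝ):ℂ) * (x:ℂ) ^ (-(σ-1)) * (x:ℂ) ^ (((1:ℝ)/2 : ℝ) : ℂ)) *
        ((8 * (2 * x ^ 2 * deriv (deriv Psi) x + 3 * x * deriv Psi x) : ℝ) : ℂ) *
        ((Real.exp (-ρ * Real.log x ^ 2) : ℝ) : ℂ) from by ring]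
  congr 2
  rw [← Complex.cpow_add _ _ hxC, ← Complex.cpow_add _ _ hxC]
  congr 1
  push_cast
  ring

end Aux17

theorem stmt17 (ρ : ℝ) (hρ : 0 < ρ) (s : ℂ) : Ifun ρ s = Ifun ρ (1 - s) := by
  unfold Ifun
  refine intervalIntegral.integral_congr fun u hu => ?_
  rw [show (1:ℂ)/2 + ↑u * (1 - s - 1/2) = 1 - (1/2 + ↑u * (s - 1/2)) from by ring]
  rw [show (1 - s - (1 - ((1:ℂ)/2 + ↑u * (s - 1/2)))) / (16 * (ρ:ℂ))
      = -((s - (1/2 + ↑u * (s - 1/2))) / (16 * (ρ:ℂ))) from by ring, Complex.sinh_neg]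
  rw [show (-(1 - ((1:ℂ)/2 + ↑u * (s - 1/2)))^2 + (1 - (1/2 + ↑u * (s - 1/2)))) / (16 * (ρ:ℂ))
      = (-(1/2 + ↑u * (s - 1/2))^2 + (1/2 + ↑u * (s - 1/2))) / (16 * (ρ:ℂ)) from by ring]
  rw [show (1 - ((1:ℂ)/2 + ↑u * (s - 1/2))) / 2
      = 1/2 - (1/2 + ↑u * (s - 1/2)) / 2 from by ring, ← Aux17.MD4_symm]
  ring
end
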